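/- Let (X, {d_r}) satisfy the weaker d_r-axioms; suppose each d_r is symmetric (d_r(x,y) = d_r(y,x) for all r > 0 and x, y ∈ X) and the family is non-degenerate (d_r(x,y) = 0 for all r > 0 implies x = y). Then there exists a metric ρ on X (symmetric, satisfying the triangle inequality, with ρ(x,y) = 0 iff x = y) such that: (i) for all r > 0 and ε > 0 there exists ε' > 0 such that ρ(x,y) < ε' implies d_r(x,y) < ε; and (ii) for every ε > 0 there exist r > 0 and ε' > 0 such that d_r(x,y) < ε' implies ρ(x,y) < ε. In particular the topology induced by the family {d_r} is metrizable. -/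

import Mathlib

open ENNReal

/-- The weaker `d_r`-axioms for a family of metric-like functions
`d : ℝ → X → X → ℝ≥0∞` indexed by `r > 0`. -/
structure WeakerDr {X : Type*} (d : ℝ → X → X → ℝ≥0∞) : Prop where
  self : ∀ (x : X) (r : ℝ), 0 < r → d r x x = 0
  mono : ∀ (x y : X) (r₁ r₂ : ℝ), 0 < r₁ → r₁ ≤ r₂ → d r₁ x y ≤ d r₂ x y
  usc : ∀ (x y : X) (r ε : ℝ), 0 < r → 0 < ε → d r x y < ENNReal.ofReal ε →
    ∃ δ : ℝ, 0 < δ ∧ d (r + δ) x y < ENNReal.ofReal ε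
  weaker_tri : ∀ (x y z : X) (r₁ r₂ r₃ : ℝ), 0 < r₁ → 0 < r₂ → 0 < r₃ →
    d (r₁ + r₂ + r₃) x y < ENNReal.ofReal r₃ → d (r₁ + r₂ + r₃) y z < ENNReal.ofReal r₂ →
    d r₁ x z ≤ d (r₁ + r₂ + r₃) x y + d (r₁ + r₂ + r₃) y z

/-- The basic entourage `U_{r,ε} = {(x,y) | d_r(x,y) < ε}`. -/
def entourageDr {X : Type*} (d : ℝ → X → X → ℝ≥0∞) (r ε : ℝ) : Set (X × X) :=
  {p | d r p.1 p.2 < ENNReal.ofReal ε}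

open scoped NNReal

namespace Stmt15Aux

/-- `ε n = (1/8) * (1/3)^n`. -/
noncomputable def eps (n : ℕ) : ℝ := (1/8) * (1/3)^n

lemma eps_pos (n : ℕ) : 0 < eps n := by unfold eps; positivity

lemma eps_le (n : ℕ) : eps n ≤ 1/8 := by
  unfold eps
  nlinarith [pow_le_one₀ (by norm_num : (0:ℝ) ≤ 1/3) (by norm_num : (1/3:ℝ) ≤ 1) (n := n)]

lemma eps_anti {m n : ℕ} (h : m ≤ n) : eps n ≤ eps m := by
  unfold eps
  have := pow_le_pow_of_le_one (by norm_num : (0:ℝ) ≤ 1/3) (by norm_num) h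
  linarith

lemma three_eps_succ (n : ℕ) : 3 * eps (n + 1) = eps n := by
  unfold eps; ring

variable {X : Type*} (d : ℝ → X → X → ℝ≥0∞)

/-- Membership in the `n`-th basic entourage `V_n = U_{n+1, eps n}`. -/
def inV (x y : X) (n : ℕ) : Prop := d ((n : ℝ) + 1) x y < ENNReal.ofReal (eps n)

lemma inV_of_le (h : WeakerDr d) {x y : X} {m n : ℕ} (hmn : m ≤ n) (hn : inV d x y n) :
    inV d x y m := by
  unfold inV at *
  calc d ((m : ℝ) + 1) x y ≤ d ((n : ℝ) + 1) x y := by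
        apply h.mono _ _ _ _ (by positivity)
        have : (m : ℝ) ≤ n := by exact_mod_cast hmn
        linarith
    _ < ENNReal.ofReal (eps n) := hn
    _ ≤ ENNReal.ofReal (eps m) := ENNReal.ofReal_le_ofReal (eps_anti hmn)

lemma inV_self (h : WeakerDr d) (x : X) (n : ℕ) : inV d x x n := by
  unfold inV
  rw [h.self x _ (by positivity)]
  exact ENNReal.ofReal_pos.mpr (eps_pos n)

/-- The key composition property: three steps in `V_{n+1}` compose into one step in `V_n`. -/
lemma inV_comp (h : WeakerDr d) (x₁ x₂ x₃ x₄ : X) (n : ℕ)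
    (h12 : inV d x₁ x₂ (n+1)) (h23 : inV d x₂ x₃ (n+1)) (h34 : inV d x₃ x₄ (n+1)) :
    inV d x₁ x₄ n := by
  unfold inV at *
  push_cast at *
  have hq : (0:ℝ) < 1/4 := by norm_num
  have heps14 : eps (n+1) ≤ 1/4 := (eps_le _).trans (by norm_num)
  have heps18 : eps (n+1) ≤ 1/8 := eps_le _
  have hof14 : ENNReal.ofReal (eps (n+1)) ≤ ENNReal.ofReal (1/4) :=
    ENNReal.ofReal_le_ofReal heps14
  -- Step 1 : `d (n + 3/2) x₂ x₄ < ofReal (2 * eps (n+1))`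
  have hsum1 : (n : ℝ) + 1 + 1 = ((n : ℝ) + 3/2) + 1/4 + 1/4 := by ring
  have step1 : d ((n : ℝ) + 3/2) x₂ x₄ < ENNReal.ofReal (2 * eps (n+1)) := by
    have := h.weaker_tri x₂ x₃ x₄ ((n : ℝ) + 3/2) (1/4) (1/4) (by positivity) hq hq
      (by rw [← hsum1]; exact lt_of_lt_of_le h23 hof14)
      (by rw [← hsum1]; exact lt_of_lt_of_le h34 hof14)
    rw [← hsum1] at this
    calc d ((n : ℝ) + 3/2) x₂ x₄ ≤ d ((n:ℝ) + 1 + 1) x₂ x₃ + d ((n:ℝ) + 1 + 1) x₃ x₄ := this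
      _ < ENNReal.ofReal (eps (n+1)) + ENNReal.ofReal (eps (n+1)) := ENNReal.add_lt_add h23 h34
      _ = ENNReal.ofReal (2 * eps (n+1)) := by
          rw [← ENNReal.ofReal_add (le_of_lt (eps_pos _)) (le_of_lt (eps_pos _))]; congr 1; ring
  -- Step 2
  have hsum2 : (n : ℝ) + 3/2 = ((n : ℝ) + 1) + 1/4 + 1/4 := by ring
  have h12' : d ((n : ℝ) + 3/2) x₁ x₂ < ENNReal.ofReal (eps (n+1)) :=
    lt_of_le_of_lt (h.mono _ _ _ _ (by positivity) (by push_cast; linarith)) h12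
  have step2 := h.weaker_tri x₁ x₂ x₄ ((n : ℝ) + 1) (1/4) (1/4) (by positivity) hq hq
    (by rw [← hsum2]; exact lt_of_lt_of_le h12' hof14)
    (by
      rw [← hsum2]
      refine lt_of_lt_of_le step1 (ENNReal.ofReal_le_ofReal ?_)
      linarith)
  rw [← hsum2] at step2
  calc d ((n:ℝ) + 1) x₁ x₄ ≤ d ((n:ℝ) + 3/2) x₁ x₂ + d ((n:ℝ) + 3/2) x₂ x₄ := step2
    _ < ENNReal.ofReal (eps (n+1)) + ENNReal.ofReal (2 * eps (n+1)) :=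
        ENNReal.add_lt_add h12' step1
    _ = ENNReal.ofReal (3 * eps (n+1)) := by
        rw [← ENNReal.ofReal_add (le_of_lt (eps_pos _)) (by linarith [eps_pos (n+1)] : (0:ℝ) ≤ 2 * eps (n+1))]; congr 1; ring
    _ = ENNReal.ofReal (eps n) := by rw [three_eps_succ]

open scoped Classical in
/-- The pre-distance used in the Frink-style metrization. -/
noncomputable def D (x y : X) : ℝ≥0 :=
  if h : ∃ n, ¬ inV d x y n then (1/2 : ℝ≥0) ^ (Nat.find h) else 0

lemma pow_half_le_iff {m n : ℕ} : (1/2 : ℝ≥0) ^ m ≤ (1/2) ^ n ↔ n ≤ m := by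
  rw [← NNReal.coe_le_coe]
  push_cast
  constructor
  · intro hle
    by_contra hlt
    push_neg at hlt
    exact absurd hle (not_le.mpr ((pow_lt_pow_iff_right_of_lt_one₀
      (by norm_num : (0:ℝ) < 1/2) (by norm_num)).mpr hlt))
  · exact fun hnm => pow_le_pow_of_le_one (by norm_num) (by norm_num) hnm

lemma D_le_iff (h : WeakerDr d) (x y : X) (n : ℕ) :
    D d x y ≤ (1/2 : ℝ≥0) ^ (n + 1) ↔ inV d x y n := by
  classical
  unfold D
  split_ifs with hex
  · rw [pow_half_le_iff]
    constructor
    · intro hle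
      have := Nat.find_spec hex
      have hn : n < Nat.find hex := hle
      have := Nat.find_min hex hn
      tauto
    · intro hV
      rw [Nat.succ_le_iff, Nat.lt_find_iff]
      intro m hm
      simp only [not_not]
      exact inV_of_le d h hm hV
  · push_neg at hex
    simp [hex n]

lemma D_le_one (x y : X) : D d x y ≤ 1 := by
  classical
  unfold D
  split_ifs with hex
  · exact pow_le_one₀ (zero_le) (by norm_num)
  · exact zero_le_one

lemma D_self (h : WeakerDr d) (x : X) : D d x x = 0 := by
  classical
  unfold D
  exact dif_neg (by push_neg; exact fun n => inV_self d h x n)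

lemma D_comm (hsymm : ∀ (r : ℝ), 0 < r → ∀ x y : X, d r x y = d r y x) (x y : X) :
    D d x y = D d y x := by
  classical
  have hVeq : inV d x y = inV d y x := by
    funext n
    unfold inV
    rw [hsymm _ (by positivity) x y]
  unfold D
  simp only [hVeq]

lemma D_shape (x y : X) : D d x y = 0 ∨ ∃ m, D d x y = (1/2 : ℝ≥0) ^ m := by
  classical
  unfold D
  split_ifs with hex
  · exact Or.inr ⟨Nat.find hex, rfl⟩
  · exact Or.inl rfl

lemma D_chain (h : WeakerDr d) (x₁ x₂ x₃ x₄ : X) :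
    D d x₁ x₄ ≤ 2 * max (D d x₁ x₂) (max (D d x₂ x₃) (D d x₃ x₄)) := by
  classical
  set M := max (D d x₁ x₂) (max (D d x₂ x₃) (D d x₃ x₄)) with hM
  have h12 : D d x₁ x₂ ≤ M := le_max_left _ _
  have h23 : D d x₂ x₃ ≤ M := le_trans (le_max_left _ _) (le_max_right _ _)
  have h34 : D d x₃ x₄ ≤ M := le_trans (le_max_right _ _) (le_max_right _ _)
  rcases eq_or_ne M 0 with hM0 | hMne
  · -- all three distances are 0, hence all pairs are in every `V_n`
    have hz : ∀ n, inV d x₁ x₄ n := by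
      intro n
      exact inV_comp d h x₁ x₂ x₃ x₄ n
        ((D_le_iff d h x₁ x₂ (n+1)).mp (le_trans h12 (by rw [hM0]; exact zero_le)))
        ((D_le_iff d h x₂ x₃ (n+1)).mp (le_trans h23 (by rw [hM0]; exact zero_le)))
        ((D_le_iff d h x₃ x₄ (n+1)).mp (le_trans h34 (by rw [hM0]; exact zero_le)))
    have hz' : D d x₁ x₄ = 0 := by
      unfold D
      exact dif_neg (by push_neg; exact hz)
    simp [hz']
  · -- `M = (1/2)^m` for some `m`, since it coincides with one of the three values
    have hform : ∃ m, M = (1/2 : ℝ≥0) ^ m := by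
      have : M = D d x₁ x₂ ∨ M = D d x₂ x₃ ∨ M = D d x₃ x₄ := by
        rcases max_choice (D d x₁ x₂) (max (D d x₂ x₃) (D d x₃ x₄)) with h1 | h1
        · exact Or.inl (hM.trans h1)
        · rcases max_choice (D d x₂ x₃) (D d x₃ x₄) with h2 | h2
          · exact Or.inr (Or.inl ((hM.trans h1).trans h2))
          · exact Or.inr (Or.inr ((hM.trans h1).trans h2))
      rcases this with h1 | h1 | h1 <;>
        [ rcases D_shape d x₁ x₂ with h2 | ⟨m, h2⟩;
          rcases D_shape d x₂ x₃ with h2 | ⟨m, h2⟩;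
          rcases D_shape d x₃ x₄ with h2 | ⟨m, h2⟩ ] <;>
        first
          | (exact absurd (h1.trans h2) hMne)
          | (exact ⟨m, h1.trans h2⟩)
    obtain ⟨m, hm⟩ := hform
    match m with
    | 0 =>
      calc D d x₁ x₄ ≤ 1 := D_le_one d x₁ x₄
        _ ≤ 2 * M := by rw [hm]; norm_num
    | 1 =>
      calc D d x₁ x₄ ≤ 1 := D_le_one d x₁ x₄
        _ ≤ 2 * M := by rw [hm]; norm_num
    | (j + 2) =>
      have key : inV d x₁ x₄ j :=
        inV_comp d h x₁ x₂ x₃ x₄ j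
          ((D_le_iff d h x₁ x₂ (j+1)).mp (h12.trans (le_of_eq hm)))
          ((D_le_iff d h x₂ x₃ (j+1)).mp (h23.trans (le_of_eq hm)))
          ((D_le_iff d h x₃ x₄ (j+1)).mp (h34.trans (le_of_eq hm)))
      have : D d x₁ x₄ ≤ (1/2 : ℝ≥0) ^ (j + 1) := (D_le_iff d h _ _ _).mpr key
      calc D d x₁ x₄ ≤ (1/2 : ℝ≥0) ^ (j + 1) := this
        _ = 2 * (1/2 : ℝ≥0) ^ (j + 2) := by
            rw [← NNReal.coe_inj]
            push_cast
            ring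
        _ = 2 * M := by rw [hm]

end Stmt15Aux

theorem stmt_15 {X : Type*} (d : ℝ → X → X → ℝ≥0∞) (h : WeakerDr d)
    (hsymm : ∀ (r : ℝ), 0 < r → ∀ x y : X, d r x y = d r y x)
    (hnd : ∀ x y : X, (∀ r : ℝ, 0 < r → d r x y = 0) → x = y) :
    ∃ ρ : X → X → ℝ,
      (∀ x y : X, 0 ≤ ρ x y) ∧
      (∀ x y : X, ρ x y = ρ y x) ∧
      (∀ x y z : X, ρ x z ≤ ρ x y + ρ y z) ∧
      (∀ x y : X, ρ x y = 0 ↔ x = y) ∧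
      (∀ r ε : ℝ, 0 < r → 0 < ε → ∃ ε' : ℝ, 0 < ε' ∧
        ∀ x y : X, ρ x y < ε' → d r x y < ENNReal.ofReal ε) ∧
      (∀ ε : ℝ, 0 < ε → ∃ r ε' : ℝ, 0 < r ∧ 0 < ε' ∧
        ∀ x y : X, d r x y < ENNReal.ofReal ε' → ρ x y < ε) := by
  classical
  set D₀ := Stmt15Aux.D d with hD₀
  have hself : ∀ x, D₀ x x = 0 := Stmt15Aux.D_self d h
  have hcomm : ∀ x y, D₀ x y = D₀ y x := Stmt15Aux.D_comm d hsymm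
  letI I := PseudoMetricSpace.ofPreNNDist D₀ hself hcomm
  set ρ : X → X → ℝ := fun x y => @dist X (@PseudoMetricSpace.toDist X I) x y with hρ
  have hle : ∀ x y, ρ x y ≤ (D₀ x y : ℝ) := fun x y =>
    PseudoMetricSpace.dist_ofPreNNDist_le D₀ hself hcomm x y
  have hge : ∀ x y, (D₀ x y : ℝ) ≤ 2 * ρ x y := fun x y =>
    PseudoMetricSpace.le_two_mul_dist_ofPreNNDist D₀ hself hcomm
      (Stmt15Aux.D_chain d h) x y
  have hρ_nonneg : ∀ x y, 0 ≤ ρ x y := fun x y => @dist_nonneg X I x y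
  have hρ_comm : ∀ x y, ρ x y = ρ y x := fun x y => @dist_comm X I x y
  have hρ_tri : ∀ x y z, ρ x z ≤ ρ x y + ρ y z := fun x y z => @dist_triangle X I x y z
  -- if ρ x y = 0 then D₀ x y = 0, hence all `inV`, hence `d r x y = 0` for all `r`
  have hD0_of : ∀ x y, D₀ x y = 0 → ∀ n, Stmt15Aux.inV d x y n := by
    intro x y h0 n
    have h0' : Stmt15Aux.D d x y = 0 := h0
    exact (Stmt15Aux.D_le_iff d h x y n).mp (by rw [h0']; exact zero_le)
  refine ⟨ρ, hρ_nonneg, hρ_comm, hρ_tri, ?_, ?_, ?_⟩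
  · -- ρ x y = 0 ↔ x = y
    intro x y
    constructor
    · intro h0
      apply hnd
      intro r hr
      have hDz : D₀ x y = 0 := by
        have h2 := hge x y
        rw [h0, mul_zero] at h2
        exact le_antisymm (by exact_mod_cast h2) (zero_le)
      have hall := hD0_of x y hDz
      -- show `d r x y = 0`
      by_contra hne
      have hpos : 0 < d r x y := pos_iff_ne_zero.mpr hne
      obtain ⟨η, hη_pos, hη_le⟩ : ∃ η : ℝ, 0 < η ∧ ENNReal.ofReal η ≤ d r x y := by
        rcases eq_or_ne (d r x y) ⊤ with htop | htop
        · exact ⟨1, one_pos, by rw [htop]; exact le_top⟩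
        · refine ⟨(d r x y).toReal, ?_, ?_⟩
          · exact ENNReal.toReal_pos hne htop
          · rw [ENNReal.ofReal_toReal htop]
      -- find n with eps n < η and r ≤ n + 1
      obtain ⟨n₀, hn₀⟩ : ∃ n : ℕ, (1/3 : ℝ) ^ n < 8 * η :=
        exists_pow_lt_of_lt_one (by positivity) (by norm_num)
      set n := max n₀ ⌈r⌉₊ with hn
      have heps_lt : Stmt15Aux.eps n < η := by
        have h1 : Stmt15Aux.eps n ≤ Stmt15Aux.eps n₀ := Stmt15Aux.eps_anti (le_max_left _ _)
        have h2 : Stmt15Aux.eps n₀ < η := by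
          unfold Stmt15Aux.eps; linarith
        linarith
      have hrn : r ≤ (n : ℝ) + 1 := by
        have : r ≤ (⌈r⌉₊ : ℝ) := Nat.le_ceil r
        have h2 : (⌈r⌉₊ : ℝ) ≤ (n : ℝ) := by exact_mod_cast le_max_right n₀ ⌈r⌉₊
        linarith
      have : d r x y < ENNReal.ofReal η := by
        calc d r x y ≤ d ((n : ℝ) + 1) x y := h.mono _ _ _ _ hr hrn
          _ < ENNReal.ofReal (Stmt15Aux.eps n) := hall n
          _ ≤ ENNReal.ofReal η := ENNReal.ofReal_le_ofReal (le_of_lt heps_lt)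
      exact absurd hη_le (not_le.mpr this)
    · intro hxy
      rw [hxy]
      exact @dist_self X I y
  · -- forward uniformity comparison
    intro r ε hr hε
    obtain ⟨n₀, hn₀⟩ : ∃ n : ℕ, (1/3 : ℝ) ^ n < 8 * ε :=
      exists_pow_lt_of_lt_one (by positivity) (by norm_num)
    set n := max n₀ ⌈r⌉₊ with hn
    have heps_le : Stmt15Aux.eps n ≤ ε := by
      have h1 : Stmt15Aux.eps n ≤ Stmt15Aux.eps n₀ := Stmt15Aux.eps_anti (le_max_left _ _)
      have h2 : Stmt15Aux.eps n₀ < ε := by unfold Stmt15Aux.eps; linarith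
      linarith
    have hrn : r ≤ (n : ℝ) + 1 := by
      have : r ≤ (⌈r⌉₊ : ℝ) := Nat.le_ceil r
      have h2 : (⌈r⌉₊ : ℝ) ≤ (n : ℝ) := by exact_mod_cast le_max_right n₀ ⌈r⌉₊
      linarith
    refine ⟨((1/2 : ℝ) ^ (n + 1)) / 2, by positivity, ?_⟩
    intro x y hxy
    have hD_lt : (D₀ x y : ℝ) ≤ (1/2 : ℝ) ^ (n + 1) := by
      have := hge x y
      linarith
    have hDle : D₀ x y ≤ (1/2 : ℝ≥0) ^ (n + 1) := by
      rw [← NNReal.coe_le_coe]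
      push_cast
      exact hD_lt
    have hV : Stmt15Aux.inV d x y n := (Stmt15Aux.D_le_iff d h x y n).mp hDle
    calc d r x y ≤ d ((n : ℝ) + 1) x y := h.mono _ _ _ _ hr hrn
      _ < ENNReal.ofReal (Stmt15Aux.eps n) := hV
      _ ≤ ENNReal.ofReal ε := ENNReal.ofReal_le_ofReal heps_le
  · -- backward uniformity comparison
    intro ε hε
    obtain ⟨n, hn⟩ : ∃ n : ℕ, (1/2 : ℝ) ^ n < ε :=
      exists_pow_lt_of_lt_one hε (by norm_num)
    refine ⟨(n : ℝ) + 1, Stmt15Aux.eps n, by positivity, Stmt15Aux.eps_pos n, ?_⟩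
    intro x y hxy
    have hV : Stmt15Aux.inV d x y n := hxy
    have hDle : D₀ x y ≤ (1/2 : ℝ≥0) ^ (n + 1) := (Stmt15Aux.D_le_iff d h x y n).mpr hV
    have h1 : ρ x y ≤ (D₀ x y : ℝ) := hle x y
    have h2 : (D₀ x y : ℝ) ≤ (1/2 : ℝ) ^ (n + 1) := by
      rw [← NNReal.coe_le_coe] at hDle
      push_cast at hDle
      exact hDle
    have h3 : (1/2 : ℝ) ^ (n + 1) ≤ (1/2 : ℝ) ^ n :=
      pow_le_pow_of_le_one (by norm_num) (by norm_num) (Nat.le_succ n)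
    linarith
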